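/- With λₙ, sₙ defined as in the asymptotic iteration method from C^∞ functions λ₀, s₀, and δₙ = λₙs_{n-1} - λ_{n-1}sₙ, any C^∞ solution y of y'' = λ₀y' + s₀y satisfies λₙ·y^{(n+1)} - λ_{n-1}·y^{(n+2)} = δₙ·y for all n ≥ 1. -/

import Mathlib

theorem aim_delta_relation
    (l s : ℕ → ℝ → ℝ)
    (hl0 : ContDiff ℝ (⊤ : ℕ∞) (l 0)) (hs0 : ContDiff ℝ (⊤ : ℕ∞) (s 0))
    (hl : ∀ n : ℕ, l (n + 1) = fun x => deriv (l n) x + s n x + l 0 x * l n x)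
    (hs : ∀ n : ℕ, s (n + 1) = fun x => deriv (s n) x + s 0 x * l n x)
    (y : ℝ → ℝ) (hy : ContDiff ℝ (⊤ : ℕ∞) y)
    (hode : ∀ x : ℝ, deriv (deriv y) x = l 0 x * deriv y x + s 0 x * y x) :
    ∀ n : ℕ, 1 ≤ n → ∀ x : ℝ,
      l n x * iteratedDeriv (n + 1) y x - l (n - 1) x * iteratedDeriv (n + 2) y x
        = (l n x * s (n - 1) x - l (n - 1) x * s n x) * y x := by
  have hy' : ContDiff ℝ (⊤ : ℕ∞) (deriv y) := (contDiff_infty_iff_deriv.mp hy).2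
  have hsmooth : ∀ n, ContDiff ℝ (⊤ : ℕ∞) (l n) ∧ ContDiff ℝ (⊤ : ℕ∞) (s n) := by
    intro n
    induction n with
    | zero => exact ⟨hl0, hs0⟩
    | succ n ih =>
      constructor
      · rw [hl n]
        exact (((contDiff_infty_iff_deriv.mp ih.1).2.add ih.2).add (hl0.mul ih.1))
      · rw [hs n]
        exact ((contDiff_infty_iff_deriv.mp ih.2).2.add (hs0.mul ih.1))
  have key : ∀ n, ∀ x, iteratedDeriv (n + 2) y x
      = l n x * deriv y x + s n x * y x := by
    intro n
    induction n with
    | zero =>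
      intro x
      rw [show (0 + 2 : ℕ) = 2 by rfl, iteratedDeriv_succ, iteratedDeriv_one]
      exact hode x
    | succ n ih =>
      intro x
      have h1 : iteratedDeriv (n + 2) y = fun x => l n x * deriv y x + s n x * y x :=
        funext ih
      rw [iteratedDeriv_succ, h1]
      have dln : DifferentiableAt ℝ (l n) x :=
        ((hsmooth n).1.differentiable (by simp)).differentiableAt
      have dsn : DifferentiableAt ℝ (s n) x :=
        ((hsmooth n).2.differentiable (by simp)).differentiableAt
      have dy' : DifferentiableAt ℝ (deriv y) x :=
        (hy'.differentiable (by simp)).differentiableAt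
      have dy : DifferentiableAt ℝ y x := (hy.differentiable (by simp)).differentiableAt
      rw [deriv_fun_add (f := fun x => l n x * deriv y x) (g := fun x => s n x * y x) (dln.mul dy') (dsn.mul dy), deriv_fun_mul dln dy', deriv_fun_mul dsn dy,
        hode x, hl n, hs n]
      ring
  intro n hn x
  obtain ⟨m, rfl⟩ : ∃ m, n = m + 1 := ⟨n - 1, (Nat.succ_pred_eq_of_pos hn).symm⟩
  simp only [Nat.add_sub_cancel]
  rw [show m + 1 + 1 = m + 2 by ring, show m + 1 + 2 = (m + 1) + 2 by ring,
    key m, key (m + 1)]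
  ring
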